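/- Let a=(a_1,...,a_n) be a weakly increasing real sequence and let e=(e_1,...,e_n) be an arbitrary real sequence. Then the matrix M_{e→a} is totally non-negative if and only if e is a restricted growth sequence relative to a (in the cap sense for weakly increasing a). -/

import Mathlib

open Polynomial Finset

/-- A real square matrix is totally non-negative if every minor (determinant of a
square submatrix selected by strictly increasing row indices and strictly increasing
column indices) is non-negative. -/
def TNN {N : ℕ} (A : Matrix (Fin N) (Fin N) ℝ) : Prop :=
  ∀ (r : ℕ) (ρ γ : Fin r → Fin N), StrictMono ρ → StrictMono γ →
    0 ≤ (A.submatrix ρ γ).det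

/-- `IsCOB n a e M` says that `M` is the change-of-basis matrix `M_{e→a}`:
for each `0 ≤ m ≤ n`, the entry `M m k` is the coefficient of `∏_{i=1}^k (x - a_i)`
in the expansion of `∏_{i=1}^m (x - e_i)` in the basis
`1, (x-a₁), …, ∏_{i=1}^n (x-a_i)`.  (Sequences are 0-indexed: `a i` is `a_{i+1}`.)
Since that basis expansion is unique, this characterizes `M_{e→a}` uniquely. -/
def IsCOB (n : ℕ) (a e : ℕ → ℝ) (M : Matrix (Fin (n+1)) (Fin (n+1)) ℝ) : Prop :=
  ∀ m : Fin (n+1),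
    (∏ i ∈ Finset.range (m : ℕ), (X - C (e i))) =
      ∑ k : Fin (n+1), C (M m k) * ∏ i ∈ Finset.range (k : ℕ), (X - C (a i))

/-- The cap-index function for the restricted-growth condition (0-indexed version of
`f` with `f(1) = 1`): `capF a e i` is `f(i+1) - 1`, so the cap for `e i` is
`a (capF a e i)`.  The index increments exactly when `e_i` equals its cap. -/
noncomputable def capF (a e : ℕ → ℝ) : ℕ → ℕ
  | 0 => 0
  | i + 1 => if e i = a (capF a e i) then capF a e i + 1 else capF a e i

/-- `e` is a restricted growth sequence relative to (weakly increasing) `a`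
(cap sense): each `e_i` is at most its cap `a_{f(i)}`. -/
def IsRGCap (n : ℕ) (a e : ℕ → ℝ) : Prop :=
  ∀ i, i < n → e i ≤ a (capF a e i)

/-- entries of the change-of-basis matrix, via the fundamental recurrence. -/
noncomputable def cc (a e : ℕ → ℝ) : ℕ → ℕ → ℝ
  | 0, 0 => 1
  | 0, _+1 => 0
  | m+1, 0 => (a 0 - e m) * cc a e m 0
  | m+1, k+1 => cc a e m k + (a (k+1) - e m) * cc a e m (k+1)

lemma cc_zero (a e : ℕ → ℝ) (k : ℕ) : cc a e 0 k = if k = 0 then 1 else 0 := by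
  cases k <;> simp [cc]

lemma cc_gt (a e : ℕ → ℝ) : ∀ m k, m < k → cc a e m k = 0 := by
  intro m
  induction m with
  | zero => intro k h; cases k; · omega
            · simp [cc]
  | succ m ih =>
    intro k h
    match k, h with
    | k+1, h =>
      rw [cc, ih k (by omega), ih (k+1) (by omega)]
      ring

lemma cc_diag (a e : ℕ → ℝ) : ∀ m, cc a e m m = 1 := by
  intro m
  induction m with
  | zero => simp [cc]
  | succ m ih => rw [cc, ih, cc_gt a e m (m+1) (by omega)]; ring

lemma cc_isCOB_nat (n : ℕ) (a e : ℕ → ℝ) : ∀ m, m ≤ n →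
    (∏ i ∈ range m, (X - C (e i))) =
      ∑ k ∈ range (n+1), C (cc a e m k) * ∏ i ∈ range k, (X - C (a i)) := by
  intro m
  induction m with
  | zero =>
    intro _
    rw [Finset.sum_range_succ']
    simp [cc]
  | succ m ih =>
    intro hm
    have hmn : m < n := hm
    rw [prod_range_succ, ih (by omega), Finset.sum_mul]
    have key : ∀ k, (C (cc a e m k) * ∏ i ∈ range k, (X - C (a i))) * (X - C (e m)) =
        C (cc a e m k) * ∏ i ∈ range (k+1), (X - C (a i)) +
          C ((a k - e m) * cc a e m k) * ∏ i ∈ range k, (X - C (a i)) := by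
      intro k
      rw [prod_range_succ, C_mul, C_sub]
      ring
    rw [Finset.sum_congr rfl (fun k _ => key k), Finset.sum_add_distrib]
    -- first sum: shift; last term vanishes
    rw [Finset.sum_range_succ (fun k => C (cc a e m k) * ∏ i ∈ range (k+1), (X - C (a i)))]
    rw [cc_gt a e m n hmn]
    rw [Finset.sum_range_succ' (fun k => C ((a k - e m) * cc a e m k) * ∏ i ∈ range k, (X - C (a i)))]
    rw [Finset.sum_range_succ' (fun k => C (cc a e (m+1) k) * ∏ i ∈ range k, (X - C (a i)))]
    simp only [cc, C_add, C_mul, C_sub, range_zero, prod_empty, add_mul, map_zero, zero_mul]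
    rw [Finset.sum_add_distrib]
    ring

lemma newton_indep (n : ℕ) (a : ℕ → ℝ) (d : Fin (n+1) → ℝ)
    (h : ∑ k : Fin (n+1), C (d k) * ∏ i ∈ range (k:ℕ), (X - C (a i)) = 0) :
    ∀ k, d k = 0 := by
  have hdeg : ∀ k : ℕ, (∏ i ∈ range k, (X - C (a i))).natDegree = k := by
    intro k
    rw [natDegree_prod_of_monic _ _ (fun i _ => monic_X_sub_C _)]
    simp [natDegree_X_sub_C]
  have hmon : ∀ k : ℕ, (∏ i ∈ range k, (X - C (a i))).Monic :=
    fun k => monic_prod_of_monic _ _ (fun i _ => monic_X_sub_C _)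
  suffices H : ∀ t : ℕ, ∀ k : Fin (n+1), n - t ≤ (k:ℕ) → d k = 0 by
    intro k; exact H n k (by omega)
  intro t
  induction t using Nat.strong_induction_on with
  | _ t ih =>
    intro k hk
    by_cases hkt : n - t < (k:ℕ)
    · exact ih (n - (k:ℕ)) (by omega) k (by omega)
    · have hk' : (k:ℕ) = n - t := by omega
      have hc := congrArg (fun p => Polynomial.coeff p (n-t)) h
      simp only [finset_sum_coeff, coeff_C_mul, coeff_zero] at hc
      rw [Finset.sum_eq_single k] at hc
      · have h1 : (∏ i ∈ range (k:ℕ), (X - C (a i))).coeff (n-t) = 1 := by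
          rw [← hk']
          have := (hmon (k:ℕ)).coeff_natDegree
          rwa [hdeg] at this
        rw [h1, mul_one] at hc
        exact hc
      · intro j _ hj
        by_cases h1 : (j:ℕ) < n - t
        · rw [coeff_eq_zero_of_natDegree_lt (by rw [hdeg]; omega), mul_zero]
        · have hj' : n - t < (j:ℕ) := by
            rcases Nat.lt_or_ge (n-t) (j:ℕ) with h2 | h2
            · exact h2
            · exfalso; exact hj (Fin.ext (by omega))
          rw [ih (n - (j:ℕ)) (by omega) j (by omega), zero_mul]
      · intro hk2; exact absurd (Finset.mem_univ k) hk2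

lemma isCOB_eq_cc {n : ℕ} {a e : ℕ → ℝ} {M : Matrix (Fin (n+1)) (Fin (n+1)) ℝ}
    (hM : IsCOB n a e M) : ∀ m k : Fin (n+1), M m k = cc a e (m:ℕ) (k:ℕ) := by
  intro m
  have h1 := hM m
  have h2 : (∏ i ∈ range (m:ℕ), (X - C (e i))) =
      ∑ k : Fin (n+1), C (cc a e (m:ℕ) (k:ℕ)) * ∏ i ∈ range (k:ℕ), (X - C (a i)) := by
    rw [cc_isCOB_nat n a e (m:ℕ) (by omega)]
    rw [Fin.sum_univ_eq_sum_range (fun k => C (cc a e (m:ℕ) k) * ∏ i ∈ range k, (X - C (a i)))]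
  have h3 : ∑ k : Fin (n+1), C (M m k - cc a e (m:ℕ) (k:ℕ)) * ∏ i ∈ range (k:ℕ), (X - C (a i)) = 0 := by
    simp only [C_sub, sub_mul]
    rw [Finset.sum_sub_distrib, ← h1, ← h2, sub_self]
  have := newton_indep n a _ h3
  intro k
  have := this k
  linarith [this]

lemma capF_le (a e : ℕ → ℝ) : ∀ m, capF a e m ≤ m := by
  intro m
  induction m with
  | zero => simp [capF]
  | succ m ih => rw [capF]; split <;> omega

lemma cc_lt_cap (a e : ℕ → ℝ) : ∀ m k, k < capF a e m → cc a e m k = 0 := by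
  intro m
  induction m with
  | zero => intro k h; simp [capF] at h
  | succ m ih =>
    intro k hk
    by_cases hinc : e m = a (capF a e m)
    · rw [capF, if_pos hinc] at hk
      match k with
      | 0 =>
        rw [cc]
        rcases Nat.eq_or_lt_of_le (Nat.lt_succ_iff.mp hk) with h | h
        · rw [← h] at hinc; rw [hinc]; ring
        · rw [ih 0 h]; ring
      | k+1 =>
        rw [cc, ih k (by omega)]
        rcases Nat.eq_or_lt_of_le (Nat.lt_succ_iff.mp hk) with h | h
        · rw [← h] at hinc; rw [hinc]; ring
        · rw [ih (k+1) h]; ring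
    · rw [capF, if_neg hinc] at hk
      match k with
      | 0 => rw [cc, ih 0 hk]; ring
      | k+1 => rw [cc, ih k (by omega), ih (k+1) hk]; ring

lemma cc_nonneg {n : ℕ} {a e : ℕ → ℝ} (ha : ∀ i j, i ≤ j → j < n → a i ≤ a j) :
    ∀ m, m ≤ n → (∀ j, j < m → e j ≤ a (capF a e j)) → ∀ k, 0 ≤ cc a e m k := by
  intro m
  induction m with
  | zero => intro _ _ k; rcases k with _ | k <;> simp [cc]
  | succ m ih =>
    intro hmn hRG k
    have hm' : m ≤ n := by omega
    have hRG' : ∀ j, j < m → e j ≤ a (capF a e j) := fun j hj => hRG j (by omega)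
    have hem : e m ≤ a (capF a e m) := hRG m (by omega)
    have hne : ∀ k', capF a e m ≤ k' → k' < n → 0 ≤ a k' - e m := by
      intro k' h1 h2
      have := ha (capF a e m) k' h1 h2
      linarith
    match k with
    | 0 =>
      rw [cc]
      rcases Nat.eq_zero_or_pos (capF a e m) with h | h
      · apply mul_nonneg
        · exact hne 0 (by omega) (by omega)
        · exact ih hm' hRG' 0
      · rw [cc_lt_cap a e m 0 h]; simp
    | k+1 =>
      rw [cc]
      have h1 : 0 ≤ cc a e m k := ih hm' hRG' k
      have h2 : 0 ≤ (a (k+1) - e m) * cc a e m (k+1) := by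
        by_cases hbig : m < k+1
        · rw [cc_gt a e m (k+1) hbig]; ring_nf; rfl
        · by_cases hlow : k+1 < capF a e m
          · rw [cc_lt_cap a e m (k+1) hlow]; ring_nf; rfl
          · apply mul_nonneg
            · exact hne (k+1) (by omega) (by omega)
            · exact ih hm' hRG' (k+1)
      linarith

lemma cc_cap_pos {n : ℕ} {a e : ℕ → ℝ} (ha : ∀ i j, i ≤ j → j < n → a i ≤ a j) :
    ∀ m, m ≤ n → (∀ j, j < m → e j ≤ a (capF a e j)) → 0 < cc a e m (capF a e m) := by
  intro m
  induction m with
  | zero => simp [cc, capF]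
  | succ m ih =>
    intro hmn hRG
    have hm' : m ≤ n := by omega
    have hRG' : ∀ j, j < m → e j ≤ a (capF a e j) := fun j hj => hRG j (by omega)
    have hem : e m ≤ a (capF a e m) := hRG m (by omega)
    have hpos : 0 < cc a e m (capF a e m) := ih hm' hRG'
    have hfle : capF a e m ≤ m := capF_le a e m
    by_cases hinc : e m = a (capF a e m)
    · rw [capF, if_pos hinc, cc]
      have h2 : 0 ≤ (a (capF a e m + 1) - e m) * cc a e m (capF a e m + 1) := by
        by_cases hbig : m < capF a e m + 1
        · rw [cc_gt a e m _ hbig]; ring_nf; rfl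
        · apply mul_nonneg
          · have : a (capF a e m) ≤ a (capF a e m + 1) := ha _ _ (by omega) (by omega)
            linarith
          · exact cc_nonneg ha m hm' hRG' _
      linarith
    · rw [capF, if_neg hinc]
      have hstrict : e m < a (capF a e m) := lt_of_le_of_ne hem hinc
      cases hcf : capF a e m with
      | zero =>
        rw [hcf] at hpos hstrict
        rw [cc]
        exact mul_pos (by linarith) hpos
      | succ k =>
        rw [hcf] at hpos hstrict
        rw [cc, cc_lt_cap a e m k (by omega)]
        have := mul_pos (show (0:ℝ) < a (k+1) - e m by linarith) hpos
        linarith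

/-- ID1: unconditional shift identity, same `a`, shifted `e`. -/
lemma cc_id1 (a e : ℕ → ℝ) : ∀ m,
    (cc a e (m+1) 0 = (a 0 - e 0) * cc a (fun j => e (j+1)) m 0) ∧
    ∀ k, cc a e (m+1) (k+1) =
      cc a (fun j => e (j+1)) m k + (a (k+1) - e 0) * cc a (fun j => e (j+1)) m (k+1) := by
  intro m
  induction m with
  | zero =>
    refine ⟨by simp [cc], fun k => ?_⟩
    match k with
    | 0 => simp [cc]
    | k+1 => simp [cc]
  | succ m ih =>
    refine ⟨?_, fun k => ?_⟩
    · show (a 0 - e (m+1)) * cc a e (m+1) 0 = _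
      rw [ih.1]
      show _ = (a 0 - e 0) * ((a 0 - (fun j => e (j+1)) m) * cc a (fun j => e (j+1)) m 0)
      simp only []
      ring
    · show cc a e (m+1) k + (a (k+1) - e (m+1)) * cc a e (m+1) (k+1) = _
      match k with
      | 0 =>
        rw [ih.1, ih.2 0]
        show _ = ((a 0 - (fun j => e (j+1)) m) * cc a (fun j => e (j+1)) m 0) + (a 1 - e 0) *
          (cc a (fun j => e (j+1)) m 0 + (a 1 - (fun j => e (j+1)) m) * cc a (fun j => e (j+1)) m 1)
        simp only []
        ring
      | k+1 =>
        rw [ih.2 k, ih.2 (k+1)]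
        show _ = (cc a (fun j => e (j+1)) m k + (a (k+1) - (fun j => e (j+1)) m) * cc a (fun j => e (j+1)) m (k+1)) + (a (k+2) - e 0) *
          (cc a (fun j => e (j+1)) m (k+1) + (a (k+2) - (fun j => e (j+1)) m) * cc a (fun j => e (j+1)) m (k+2))
        simp only []
        ring

/-- ID2: equality case shift identity, shifted `a` and `e`. -/
lemma cc_id2 (a e : ℕ → ℝ) (h : e 0 = a 0) : ∀ m,
    (cc a e (m+1) 0 = 0) ∧
    ∀ k, cc a e (m+1) (k+1) = cc (fun j => a (j+1)) (fun j => e (j+1)) m k := by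
  intro m
  induction m with
  | zero =>
    refine ⟨by simp [cc, h], fun k => ?_⟩
    match k with
    | 0 => simp [cc]
    | k+1 => simp [cc]
  | succ m ih =>
    refine ⟨?_, fun k => ?_⟩
    · show (a 0 - e (m+1)) * cc a e (m+1) 0 = 0
      rw [ih.1, mul_zero]
    · show cc a e (m+1) k + (a (k+1) - e (m+1)) * cc a e (m+1) (k+1) = _
      match k with
      | 0 =>
        rw [ih.1, ih.2 0]
        show _ = ((fun j => a (j+1)) 0 - (fun j => e (j+1)) m) * cc (fun j => a (j+1)) (fun j => e (j+1)) m 0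
        simp only []
        ring
      | k+1 =>
        rw [ih.2 k, ih.2 (k+1)]
        conv_rhs => rw [cc]

lemma capF_shift_eq (a e : ℕ → ℝ) (h : e 0 = a 0) : ∀ i,
    capF a e (i+1) = capF (fun j => a (j+1)) (fun j => e (j+1)) i + 1 := by
  intro i
  induction i with
  | zero => simp [capF, h]
  | succ i ih =>
    rw [capF]
    conv_rhs => rw [capF]
    rw [ih]
    split_ifs <;> omega

lemma capF_shift_ne (a e : ℕ → ℝ) (h : ¬ e 0 = a 0) : ∀ i,
    capF a e (i+1) = capF a (fun j => e (j+1)) i := by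
  intro i
  induction i with
  | zero => simp [capF, h]
  | succ i ih =>
    rw [capF]
    conv_rhs => rw [capF]
    rw [ih]

/-- the block matrix 1 ⊕ A -/
def ob {N : ℕ} (A : Matrix (Fin N) (Fin N) ℝ) : Matrix (Fin (N+1)) (Fin (N+1)) ℝ :=
  Matrix.of fun i j =>
    if hi : (i:ℕ) = 0 then (if (j:ℕ) = 0 then 1 else 0)
    else if hj : (j:ℕ) = 0 then 0
    else A ⟨(i:ℕ)-1, by have := i.isLt; omega⟩ ⟨(j:ℕ)-1, by have := j.isLt; omega⟩

lemma tnn_ob {N : ℕ} {A : Matrix (Fin N) (Fin N) ℝ} (hA : TNN A) : TNN (ob A) := by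
  have key : ∀ (r : ℕ) (ρ γ : Fin r → Fin (N+1)), StrictMono ρ → StrictMono γ →
      (∀ p, (ρ p : ℕ) ≠ 0) → (∀ q, (γ q : ℕ) ≠ 0) → 0 ≤ ((ob A).submatrix ρ γ).det := by
    intro r ρ γ hρ hγ hρ0 hγ0
    have e1 : ∀ p, (ρ p : ℕ) - 1 < N := fun p => by have := (ρ p).isLt; have := hρ0 p; omega
    have e2 : ∀ q, (γ q : ℕ) - 1 < N := fun q => by have := (γ q).isLt; have := hγ0 q; omega
    have hEq : (ob A).submatrix ρ γ =
        A.submatrix (fun p => ⟨(ρ p : ℕ) - 1, e1 p⟩) (fun q => ⟨(γ q : ℕ) - 1, e2 q⟩) := by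
      ext p q
      simp only [Matrix.submatrix_apply, ob, Matrix.of_apply, dif_neg (hρ0 p), dif_neg (hγ0 q)]
    rw [hEq]
    refine hA r _ _ ?_ ?_
    · intro x y hxy
      have h1 := hρ hxy
      have h2 := hρ0 x
      rw [Fin.lt_def] at h1 ⊢
      simp only
      omega
    · intro x y hxy
      have h1 := hγ hxy
      have h2 := hγ0 x
      rw [Fin.lt_def] at h1 ⊢
      simp only
      omega
  intro r ρ γ hρ hγ
  match r with
  | 0 => simp
  | Nat.succ s =>
    by_cases h1 : (ρ 0 : ℕ) = 0
    · by_cases h2 : (γ 0 : ℕ) = 0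
      · -- expand along the first row
        have hgq0 : ∀ q : Fin s.succ, q ≠ 0 → (γ q : ℕ) ≠ 0 := by
          intro q hq
          have : γ 0 < γ q := hγ (Fin.pos_of_ne_zero hq)
          rw [Fin.lt_def] at this
          omega
        have hdet : ((ob A).submatrix ρ γ).det =
            (((ob A).submatrix ρ γ).submatrix Fin.succ Fin.succ).det := by
          rw [Matrix.det_succ_row_zero, Finset.sum_eq_single (0 : Fin s.succ)]
          · have hS00 : ((ob A).submatrix ρ γ) 0 0 = 1 := by
              simp [-Fin.val_eq_zero_iff, ob, Matrix.submatrix_apply, h1, h2]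
            rw [hS00, Fin.succAbove_zero]
            simp
          · intro q _ hq
            have hS0q : ((ob A).submatrix ρ γ) 0 q = 0 := by
              simp [-Fin.val_eq_zero_iff, ob, Matrix.submatrix_apply, h1, hgq0 q hq]
            rw [hS0q]
            ring
          · intro h; exact absurd (Finset.mem_univ _) h
        rw [hdet, Matrix.submatrix_submatrix]
        apply key s _ _ (hρ.comp Fin.strictMono_succ) (hγ.comp Fin.strictMono_succ)
        · intro p
          show (ρ (Fin.succ p) : ℕ) ≠ 0
          have := hρ (Fin.succ_pos p)
          rw [Fin.lt_def] at this
          omega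
        · intro q
          show (γ (Fin.succ q) : ℕ) ≠ 0
          have := hγ (Fin.succ_pos q)
          rw [Fin.lt_def] at this
          omega
      · apply le_of_eq
        symm
        apply Matrix.det_eq_zero_of_row_eq_zero 0
        intro q
        have hgq : (γ q : ℕ) ≠ 0 := by
          by_cases hq : q = 0
          · rw [hq]; exact h2
          · have : γ 0 < γ q := hγ (Fin.pos_of_ne_zero hq)
            rw [Fin.lt_def] at this
            omega
        simp [-Fin.val_eq_zero_iff, ob, Matrix.submatrix_apply, h1, hgq]
    · by_cases h2 : (γ 0 : ℕ) = 0
      · apply le_of_eq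
        symm
        apply Matrix.det_eq_zero_of_column_eq_zero 0
        intro p
        have hrp : (ρ p : ℕ) ≠ 0 := by
          by_cases hp : p = 0
          · rw [hp]; exact h1
          · have : ρ 0 < ρ p := hρ (Fin.pos_of_ne_zero hp)
            rw [Fin.lt_def] at this
            omega
        simp [-Fin.val_eq_zero_iff, ob, Matrix.submatrix_apply, hrp, h2]
      · apply key
        · exact hρ
        · exact hγ
        · intro p
          have : ρ 0 ≤ ρ p := hρ.monotone (Fin.zero_le p)
          rw [Fin.le_def] at this
          omega
        · intro q
          have : γ 0 ≤ γ q := hγ.monotone (Fin.zero_le q)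
          rw [Fin.le_def] at this
          omega

def elem {N : ℕ} (p q : Fin N) (c : ℝ) : Matrix (Fin N) (Fin N) ℝ :=
  1 + Matrix.single p q c

lemma mul_elem_apply {N : ℕ} (A : Matrix (Fin N) (Fin N) ℝ) (p q : Fin N) (c : ℝ)
    (i b : Fin N) :
    (A * elem p q c) i b = A i b + if b = q then A i p * c else 0 := by
  rw [elem, Matrix.mul_add, Matrix.mul_one, Matrix.add_apply]
  by_cases hb : b = q
  · subst hb
    rw [Matrix.mul_single_apply_same, if_pos rfl]
  · rw [Matrix.mul_single_apply_of_ne _ _ _ _ _ hb, if_neg hb]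

lemma tnn_mul_elem {N : ℕ} {A : Matrix (Fin N) (Fin N) ℝ} (hA : TNN A)
    {p q : Fin N} (hpq : (q:ℕ)+1 = (p:ℕ)) {c : ℝ} (hc : 0 ≤ c) :
    TNN (A * elem p q c) := by
  intro r ρ γ hρ hγ
  by_cases hex : ∃ q0, γ q0 = q
  · obtain ⟨q0, hq0⟩ := hex
    have hS : (A * elem p q c).submatrix ρ γ =
        Matrix.updateCol (A.submatrix ρ γ) q0
          ((fun x => A (ρ x) q) + fun x => c * A (ρ x) p) := by
      ext x y
      rw [Matrix.submatrix_apply, mul_elem_apply, Matrix.updateCol_apply]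
      by_cases hy : y = q0
      · subst hy
        rw [if_pos hq0, if_pos rfl, hq0, Pi.add_apply]
        ring
      · have hne : γ y ≠ q := by
          rw [← hq0]
          exact fun hcon => hy (hγ.injective hcon)
        rw [if_neg hne, if_neg hy, add_zero, Matrix.submatrix_apply]
    rw [hS, Matrix.det_updateCol_add]
    have hterm1 : Matrix.updateCol (A.submatrix ρ γ) q0 (fun x => A (ρ x) q) =
        A.submatrix ρ γ := by
      have : (fun x => A (ρ x) q) = fun x => (A.submatrix ρ γ) x q0 := by
        funext x
        rw [Matrix.submatrix_apply, hq0]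
      rw [this, Matrix.updateCol_eq_self]
    rw [hterm1]
    have hterm2 : (0:ℝ) ≤ (Matrix.updateCol (A.submatrix ρ γ) q0
        (fun x => c * A (ρ x) p)).det := by
      have hsmul : (fun x => c * A (ρ x) p) = c • (fun x => A (ρ x) p) := rfl
      rw [hsmul, Matrix.det_updateCol_smul]
      by_cases hex2 : ∃ q1, γ q1 = p
      · obtain ⟨q1, hq1⟩ := hex2
        have hne : q0 ≠ q1 := by
          intro hcon
          rw [hcon, hq1] at hq0
          rw [← hq0] at hpq
          omega
        have : (Matrix.updateCol (A.submatrix ρ γ) q0 (fun x => A (ρ x) p)).det = 0 := by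
          apply Matrix.det_zero_of_column_eq hne
          intro x
          rw [Matrix.updateCol_apply, Matrix.updateCol_apply,
            if_pos rfl, if_neg (Ne.symm hne), Matrix.submatrix_apply, hq1]
        rw [this, mul_zero]
      · have hγ'lt : ∀ y, y ≠ q0 → (γ y : ℕ) ≠ (p:ℕ) := by
          intro y _ hcon
          exact hex2 ⟨y, Fin.ext hcon⟩
        set γ' : Fin r → Fin N := fun y => if y = q0 then p else γ y with hγ'
        have hT : Matrix.updateCol (A.submatrix ρ γ) q0 (fun x => A (ρ x) p) =
            A.submatrix ρ γ' := by
          ext x y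
          by_cases hy : y = q0
          · subst hy
            simp [Matrix.updateCol_apply, hγ']
          · simp [Matrix.updateCol_apply, hγ', hy]
        have hγ'mono : StrictMono γ' := by
          have hval : ∀ y, (γ' y : ℕ) = if y = q0 then (p:ℕ) else (γ y:ℕ) := by
            intro y; rw [hγ']; by_cases hy : y = q0 <;> simp [hy]
          have hgtq0 : ∀ y, q0 < y → (p:ℕ) < (γ y:ℕ) := by
            intro y hy
            have h3 : γ q0 < γ y := hγ hy
            rw [hq0, Fin.lt_def] at h3
            have := hγ'lt y (by intro h; rw [h] at hy; exact lt_irrefl _ hy)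
            omega
          have hltq0 : ∀ y, y < q0 → (γ y:ℕ) < (p:ℕ) := by
            intro y hy
            have h3 : γ y < γ q0 := hγ hy
            rw [hq0, Fin.lt_def] at h3
            omega
          intro x y hxy
          rw [Fin.lt_def, hval, hval]
          by_cases hx : x = q0 <;> by_cases hy : y = q0
          · rw [hx, hy] at hxy; exact absurd hxy (lt_irrefl q0)
          · rw [if_pos hx, if_neg hy]; exact hgtq0 y (hx ▸ hxy)
          · rw [if_neg hx, if_pos hy]; exact hltq0 x (hy ▸ hxy)
          · rw [if_neg hx, if_neg hy]; exact (Fin.lt_def).mp (hγ hxy)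
        rw [hT]
        exact mul_nonneg hc (hA r ρ γ' hρ hγ'mono)
    linarith [hA r ρ γ hρ hγ]
  · have : (A * elem p q c).submatrix ρ γ = A.submatrix ρ γ := by
      ext x y
      rw [Matrix.submatrix_apply, mul_elem_apply, Matrix.submatrix_apply,
        if_neg (fun hcon => hex ⟨y, hcon⟩), add_zero]
    rw [this]
    exact hA r ρ γ hρ hγ

/-- partial lower bidiagonal: ones on diagonal, β i at (i, i-1) for i ≤ t. -/
def bdM {N : ℕ} (β : ℕ → ℝ) (t : ℕ) : Matrix (Fin N) (Fin N) ℝ :=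
  Matrix.of fun i j =>
    if (i:ℕ) = (j:ℕ) then 1 else if (i:ℕ) = (j:ℕ)+1 ∧ (i:ℕ) ≤ t then β (i:ℕ) else 0

lemma bdM_zero {N : ℕ} (β : ℕ → ℝ) : (bdM β 0 : Matrix (Fin N) (Fin N) ℝ) = 1 := by
  ext i j
  rw [bdM, Matrix.of_apply, Matrix.one_apply]
  by_cases h : (i:ℕ) = (j:ℕ)
  · rw [if_pos h, if_pos (Fin.ext h)]
  · rw [if_neg h, if_neg (fun hc : (i:ℕ) = (j:ℕ)+1 ∧ (i:ℕ) ≤ 0 => by omega),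
      if_neg (fun hc : i = j => h (congrArg Fin.val hc))]

lemma bdM_succ_eq {N : ℕ} (β : ℕ → ℝ) (t : ℕ) (ht : t+1 < N) :
    (bdM β (t+1) : Matrix (Fin N) (Fin N) ℝ) =
      bdM β t * elem ⟨t+1, ht⟩ ⟨t, by omega⟩ (β (t+1)) := by
  ext i j
  rw [mul_elem_apply]
  have hv1 : ((⟨t+1, ht⟩ : Fin N) : ℕ) = t+1 := rfl
  have hv2 : ((⟨t, by omega⟩ : Fin N) : ℕ) = t := rfl
  simp only [bdM, Matrix.of_apply, Fin.ext_iff, hv1, hv2]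
  split_ifs
  all_goals try (exfalso; omega)
  all_goals try ring
  all_goals simp_all
  all_goals try ring

lemma tnn_mul_bdM {N : ℕ} {A : Matrix (Fin N) (Fin N) ℝ} (hA : TNN A) (β : ℕ → ℝ)
    (hβ : ∀ j, j < N → 0 ≤ β j) : ∀ t, TNN (A * bdM β t) := by
  intro t
  induction t with
  | zero => rw [bdM_zero, mul_one]; exact hA
  | succ t ih =>
    by_cases ht : t+1 < N
    · rw [bdM_succ_eq β t ht, ← mul_assoc]
      exact tnn_mul_elem ih rfl (hβ (t+1) ht)
    · have : (bdM β (t+1) : Matrix (Fin N) (Fin N) ℝ) = bdM β t := by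
        ext i j
        rw [bdM, bdM, Matrix.of_apply, Matrix.of_apply]
        have := i.isLt
        split_ifs <;> first | rfl | omega
      rw [this]
      exact ih

lemma mul_bdM_apply {N : ℕ} (A : Matrix (Fin N) (Fin N) ℝ) (β : ℕ → ℝ) (i j : Fin N) :
    (A * (bdM β N : Matrix (Fin N) (Fin N) ℝ)) i j = A i j +
      (if h : (j:ℕ)+1 < N then A i ⟨(j:ℕ)+1, h⟩ * β ((j:ℕ)+1) else 0) := by
  rw [Matrix.mul_apply]
  have hsplit : ∀ l : Fin N, (bdM β N : Matrix (Fin N) (Fin N) ℝ) l j =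
      (if l = j then 1 else 0) + (if (l:ℕ) = (j:ℕ)+1 then β (l:ℕ) else 0) := by
    intro l
    rw [bdM, Matrix.of_apply]
    have := l.isLt
    simp only [Fin.ext_iff]
    split_ifs <;> first | (exfalso; omega) | ring1 | omega
  simp only [hsplit, mul_add, Finset.sum_add_distrib]
  congr 1
  · simp only [mul_ite, mul_one, mul_zero]
    rw [Finset.sum_ite_eq' Finset.univ j (fun l => A i l)]
    simp
  · by_cases h : (j:ℕ)+1 < N
    · rw [dif_pos h]
      have : ∀ l : Fin N, (A i l * if (l:ℕ) = (j:ℕ)+1 then β (l:ℕ) else 0) =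
          if l = ⟨(j:ℕ)+1, h⟩ then A i l * β (l:ℕ) else 0 := by
        intro l
        by_cases hl : l = ⟨(j:ℕ)+1, h⟩
        · rw [if_pos hl, if_pos (show (l:ℕ) = (j:ℕ)+1 by rw [hl])]
        · rw [if_neg hl, if_neg (fun hc => hl (Fin.ext hc)), mul_zero]
      simp only [this]
      rw [Finset.sum_ite_eq' Finset.univ _ (fun l => A i l * β (l:ℕ))]
      simp
    · rw [dif_neg h]
      apply Finset.sum_eq_zero
      intro l _
      rw [if_neg (fun hc : (l:ℕ) = (j:ℕ)+1 => h (by have := l.isLt; omega)), mul_zero]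

lemma ob_00 {N : ℕ} (A : Matrix (Fin N) (Fin N) ℝ) {i j : Fin (N+1)}
    (hi : (i:ℕ) = 0) (hj : (j:ℕ) = 0) : ob A i j = 1 := by
  simp [-Fin.val_eq_zero_iff, ob, hi, hj]

lemma ob_0r {N : ℕ} (A : Matrix (Fin N) (Fin N) ℝ) {i j : Fin (N+1)}
    (hi : (i:ℕ) = 0) (hj : (j:ℕ) ≠ 0) : ob A i j = 0 := by
  simp [-Fin.val_eq_zero_iff, ob, hi, hj]

lemma ob_r0 {N : ℕ} (A : Matrix (Fin N) (Fin N) ℝ) {i j : Fin (N+1)}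
    (hi : (i:ℕ) ≠ 0) (hj : (j:ℕ) = 0) : ob A i j = 0 := by
  simp [-Fin.val_eq_zero_iff, ob, hi, hj]

lemma ob_rr {N : ℕ} (A : Matrix (Fin N) (Fin N) ℝ) {i j : Fin (N+1)}
    (hi : (i:ℕ) ≠ 0) (hj : (j:ℕ) ≠ 0) :
    ob A i j = A ⟨(i:ℕ)-1, by have := i.isLt; omega⟩ ⟨(j:ℕ)-1, by have := j.isLt; omega⟩ := by
  simp [-Fin.val_eq_zero_iff, ob, hi, hj]

lemma tnn_fin_one (A : Matrix (Fin 1) (Fin 1) ℝ) (h : 0 ≤ A 0 0) : TNN A := by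
  intro r ρ γ hρ hγ
  match r with
  | 0 => simp
  | 1 =>
    rw [Matrix.det_fin_one, Matrix.submatrix_apply, Subsingleton.elim (ρ 0) 0,
      Subsingleton.elim (γ 0) 0]
    exact h
  | r+2 =>
    have h01 : (0 : Fin (r+2)) < 1 := by rw [Fin.lt_def]; norm_num
    have := hρ h01
    rw [Subsingleton.elim (ρ 0) (ρ 1)] at this
    exact absurd this (lt_irrefl _)

lemma strictMono_of_fin_one {s : ℕ} (f : Fin 1 → Fin s) : StrictMono f := by
  intro x y hxy
  rw [Subsingleton.elim x y] at hxy
  exact absurd hxy (lt_irrefl y)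

lemma tnn_cc : ∀ (n : ℕ) (a e : ℕ → ℝ), (∀ i j, i ≤ j → j < n → a i ≤ a j) →
    (∀ i, i < n → e i ≤ a (capF a e i)) →
    TNN (Matrix.of fun m k : Fin (n+1) => cc a e (m:ℕ) (k:ℕ)) := by
  intro n
  induction n with
  | zero =>
    intro a e _ _
    apply tnn_fin_one
    simp [cc]
  | succ n IH =>
    intro a e ha hRG
    by_cases h0 : e 0 = a 0
    · -- equality case : block decomposition
      have hobeq : (Matrix.of fun m k : Fin (n+2) => cc a e (m:ℕ) (k:ℕ)) =
          ob (Matrix.of fun m k : Fin (n+1) =>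
            cc (fun j => a (j+1)) (fun j => e (j+1)) (m:ℕ) (k:ℕ)) := by
        ext i j
        by_cases hi : (i:ℕ) = 0
        · by_cases hj : (j:ℕ) = 0
          · rw [ob_00 _ hi hj, Matrix.of_apply, hi, hj]; simp [cc]
          · rw [ob_0r _ hi hj, Matrix.of_apply, hi]
            exact cc_gt a e 0 (j:ℕ) (by omega)
        · obtain ⟨m, hm⟩ : ∃ m, (i:ℕ) = m+1 := ⟨(i:ℕ)-1, by omega⟩
          by_cases hj : (j:ℕ) = 0
          · rw [ob_r0 _ hi hj, Matrix.of_apply, hm, hj]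
            exact (cc_id2 a e h0 m).1
          · rw [ob_rr _ hi hj, Matrix.of_apply, Matrix.of_apply]
            obtain ⟨k, hk⟩ : ∃ k, (j:ℕ) = k+1 := ⟨(j:ℕ)-1, by omega⟩
            simp only [hm, hk, Nat.add_sub_cancel]
            exact (cc_id2 a e h0 m).2 k
      rw [hobeq]
      apply tnn_ob
      apply IH
      · intro i j hij hjn
        exact ha (i+1) (j+1) (by omega) (by omega)
      · intro i hin
        have h1 := hRG (i+1) (by omega)
        rw [capF_shift_eq a e h0 i] at h1
        exact h1
    · -- strict case : bidiagonal factorization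
      have he0 : e 0 ≤ a 0 := by
        have := hRG 0 (by omega)
        rwa [show capF a e 0 = 0 from rfl] at this
      have hfact : (Matrix.of fun m k : Fin (n+2) => cc a e (m:ℕ) (k:ℕ)) =
          ob (Matrix.of fun m k : Fin (n+1) => cc a (fun j => e (j+1)) (m:ℕ) (k:ℕ)) *
            bdM (fun m => a (m-1) - e 0) (n+2) := by
        ext i j
        rw [mul_bdM_apply, Matrix.of_apply]
        by_cases hi : (i:ℕ) = 0
        · have hz : (if h : (j:ℕ)+1 < n+2 then
              ob (Matrix.of fun m k : Fin (n+1) => cc a (fun j => e (j+1)) (m:ℕ) (k:ℕ)) i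
                ⟨(j:ℕ)+1, h⟩ * ((fun m => a (m-1) - e 0) ((j:ℕ)+1)) else 0) = 0 := by
            by_cases hcase : (j:ℕ)+1 < n+2
            · rw [dif_pos hcase, ob_0r _ hi (by simp), zero_mul]
            · rw [dif_neg hcase]
          rw [hz, add_zero, hi]
          by_cases hj : (j:ℕ) = 0
          · rw [ob_00 _ hi hj, hj]; simp [cc]
          · rw [ob_0r _ hi hj]
            exact cc_gt a e 0 (j:ℕ) (by omega)
        · obtain ⟨m, hm⟩ : ∃ m, (i:ℕ) = m+1 := ⟨(i:ℕ)-1, by omega⟩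
          have hmn : m ≤ n := by have := i.isLt; omega
          by_cases hj : (j:ℕ) = 0
          · have h1 : (j:ℕ)+1 < n+2 := by omega
            rw [dif_pos h1, ob_r0 _ hi hj, ob_rr _ hi (by simp), Matrix.of_apply]
            simp only [hm, hj, Nat.add_sub_cancel]
            rw [(cc_id1 a e m).1]
            ring
          · obtain ⟨k, hk⟩ : ∃ k, (j:ℕ) = k+1 := ⟨(j:ℕ)-1, by omega⟩
            rw [ob_rr _ hi hj, Matrix.of_apply]
            by_cases h1 : (j:ℕ)+1 < n+2
            · rw [dif_pos h1, ob_rr _ hi (by simp), Matrix.of_apply]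
              simp only [hm, hk, Nat.add_sub_cancel]
              rw [(cc_id1 a e m).2 k]
              ring
            · rw [dif_neg h1]
              simp only [hm, hk, Nat.add_sub_cancel]
              rw [(cc_id1 a e m).2 k,
                cc_gt a (fun j => e (j+1)) m (k+1) (by omega)]
              ring
      rw [hfact]
      apply tnn_mul_bdM
      · apply tnn_ob
        apply IH
        · intro i j hij hjn
          exact ha i j hij (by omega)
        · intro i hin
          have h1 := hRG (i+1) (by omega)
          rw [capF_shift_ne a e h0 i] at h1
          exact h1
      · intro j hjn
        have h1 : a 0 ≤ a (j-1) := ha 0 (j-1) (by omega) (by omega)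
        show (0:ℝ) ≤ a (j-1) - e 0
        linarith

theorem statement1 (n : ℕ) (a e : ℕ → ℝ)
    (ha : ∀ i j, i ≤ j → j < n → a i ≤ a j)
    (M : Matrix (Fin (n+1)) (Fin (n+1)) ℝ) (hM : IsCOB n a e M) :
    TNN M ↔ IsRGCap n a e := by
  have hMc : M = Matrix.of fun m k : Fin (n+1) => cc a e (m:ℕ) (k:ℕ) := by
    ext i j
    rw [Matrix.of_apply]
    exact isCOB_eq_cc hM i j
  constructor
  · intro hT i hi
    by_contra hnot
    have hex : ∃ i0, i0 < n ∧ ¬ e i0 ≤ a (capF a e i0) := ⟨i, hi, hnot⟩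
    classical
    obtain ⟨hi0n, hi0v⟩ := Nat.find_spec hex
    set i0 := Nat.find hex with hi0def
    have hRGlt : ∀ j, j < i0 → e j ≤ a (capF a e j) := by
      intro j hj
      by_contra hj2
      exact Nat.find_min hex hj ⟨by omega, hj2⟩
    have hpos := cc_cap_pos ha i0 (by omega) hRGlt
    have hneg : a (capF a e i0) < e i0 := lt_of_not_ge hi0v
    have hent : cc a e (i0+1) (capF a e i0) < 0 := by
      cases hcf : capF a e i0 with
      | zero =>
        rw [hcf] at hpos hneg
        rw [cc]
        exact mul_neg_of_neg_of_pos (by linarith) hpos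
      | succ k =>
        rw [hcf] at hpos hneg
        rw [cc, cc_lt_cap a e i0 k (by omega)]
        have := mul_neg_of_neg_of_pos (show a (k+1) - e i0 < 0 by linarith) hpos
        linarith
    have hcap_lt : capF a e i0 < n+1 := by have := capF_le a e i0; omega
    have hdet := hT 1 (fun _ => ⟨i0+1, by omega⟩) (fun _ => ⟨capF a e i0, hcap_lt⟩)
      (strictMono_of_fin_one _) (strictMono_of_fin_one _)
    rw [Matrix.det_fin_one, Matrix.submatrix_apply, hMc, Matrix.of_apply] at hdet
    exact absurd hdet (not_le.mpr hent)
  · intro hRG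
    rw [hMc]
    exact tnn_cc n a e ha hRG
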